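/- arXiv:1307.4471 — 4 statements merged into one kernel-verified Lean document; each statement's English description precedes it below -/
import Mathlib

section
/- Let u and u' be nodes of the pruned run DAG G' with (u,u') ∈ E'. Then the profile of u' is obtained from the profile of u by appending one letter: h_{u'} = h_u·0 or h_{u'} = h_u·1. -/
/-!
Profile trees for Büchi determinization (Fisman–Kupferman–Vardi–Wilke style profiles).
Common definitions: nondeterministic Büchi word automata (NBW), the run DAG `G`,
profiles of nodes, and the pruned run DAG `G'`.
-/

/-- A nondeterministic Büchi word automaton `A = (Alph, Q, Qin, ρ, F)` with `Qin ∩ F = ∅`. -/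
structure NBW (Alph Q : Type*) where
  Qin : Set Q
  ρ : Q → Alph → Set Q
  F : Set Q
  disj : Qin ∩ F = ∅

variable {Alph Q : Type*} (A : NBW Alph Q) (w : ℕ → Alph)

/-- Lexicographic order `L₁ ≤ L₂` on profiles (lists over ℕ). -/
def lexLE (L₁ L₂ : List ℕ) : Prop :=
  List.Lex (· < ·) L₁ L₂ ∨ L₁ = L₂

/-- Strict lexicographic order `L₁ < L₂` on profiles. -/
def lexLT (L₁ L₂ : List ℕ) : Prop :=
  List.Lex (· < ·) L₁ L₂

open Classical in
/-- The profiles of all finite initial runs of `A` (on `w`) to the node `v = (q, i)`: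
for each run `p₀,…,p_i` with `p₀ ∈ Qin`, `p_{j+1} ∈ ρ(p_j, w_j)` and `p_i = q`, the
sequence of `F`-visitation labels `f(p₀,0) ⋯ f(p_i,i)` (where `f` is 1 on `F`-nodes, else 0). -/
def runProfiles (v : Q × ℕ) : Set (List ℕ) :=
  { L | ∃ p : ℕ → Q, p 0 ∈ A.Qin ∧ (∀ j < v.2, p (j + 1) ∈ A.ρ (p j) (w j)) ∧
        p v.2 = v.1 ∧ L = (List.range (v.2 + 1)).map (fun j => if p j ∈ A.F then 1 else 0) }

/-- `v` is a node of the run DAG `G = (V, E)` (equivalently of the pruned DAG `G'`):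
there is a finite run of `A` to `v.1` on `w₀ ⋯ w_{v.2 - 1}`. -/
def memV (v : Q × ℕ) : Prop := (runProfiles A w v).Nonempty

/-- `L` is the lexicographically maximal profile among all initial paths to `v`. -/
def IsMaxProfile (v : Q × ℕ) (L : List ℕ) : Prop :=
  L ∈ runProfiles A w v ∧ ∀ L' ∈ runProfiles A w v, lexLE L' L

open Classical in
/-- The profile `h_v` of a node `v`: the lexicographically maximal profile of an
initial path to `v` (junk value `[]` if `v` is not a node of the DAG). -/
noncomputable def profile (v : Q × ℕ) : List ℕ :=
  if h : ∃ L, IsMaxProfile A w v L then h.choose else []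

/-- The edge relation `E` of the run DAG `G`: `E((q,i), (q',i+1))` iff `(q,i) ∈ V`
and `q' ∈ ρ(q, w_i)`. -/
def edgeG (u v : Q × ℕ) : Prop :=
  memV A w u ∧ v.2 = u.2 + 1 ∧ v.1 ∈ A.ρ u.1 (w u.2)

/-- The edge relation `E'` of the pruned run DAG `G'`: `(u,v) ∈ E` and every
`E`-parent `u'` of `v` satisfies `h_{u'} ≤ h_u`. -/
def edgeG' (u v : Q × ℕ) : Prop :=
  edgeG A w u v ∧ ∀ u', edgeG A w u' v → lexLE (profile A w u') (profile A w u)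


section Aux

lemma lexLE_iff {L₁ L₂ : List ℕ} : lexLE L₁ L₂ ↔ L₁ ≤ L₂ := by
  show _ ↔ (L₁ = L₂ ∨ _)
  exact or_comm

lemma lex_append_of_length_eq : ∀ {L₁ L₂ : List ℕ} (s t : List ℕ),
    L₁.length = L₂.length → List.Lex (· < ·) L₁ L₂ →
    List.Lex (· < ·) (L₁ ++ s) (L₂ ++ t)
  | [], L₂, s, t, hlen, hlex => by
      have : L₂ = [] := List.length_eq_zero_iff.mp hlen.symm
      subst this; cases hlex
  | a :: L₁, [], s, t, hlen, hlex => by simp at hlen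
  | a :: L₁, b :: L₂, s, t, hlen, hlex => by
      cases hlex with
      | rel h => exact List.Lex.rel h
      | cons h =>
          exact List.Lex.cons (lex_append_of_length_eq s t (by simpa using hlen) h)

lemma lexLE_append {L₁ L₂ : List ℕ} (x : ℕ) (hlen : L₁.length = L₂.length)
    (h : lexLE L₁ L₂) : lexLE (L₁ ++ [x]) (L₂ ++ [x]) := by
  rcases h with h | rfl
  · exact Or.inl (lex_append_of_length_eq _ _ hlen h)
  · exact Or.inr rfl

lemma length_of_mem_runProfiles {v : Q × ℕ} {L : List ℕ}
    (hL : L ∈ runProfiles A w v) : L.length = v.2 + 1 := by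
  obtain ⟨p, -, -, -, rfl⟩ := hL
  simp

open Classical in
lemma runProfiles_finite (v : Q × ℕ) : (runProfiles A w v).Finite := by
  apply Set.Finite.subset ((List.finite_length_eq Bool (v.2 + 1)).image
    (fun l => l.map (fun b => if b then (1 : ℕ) else 0)))
  rintro L ⟨p, -, -, -, rfl⟩
  refine ⟨(List.range (v.2 + 1)).map (fun j => if p j ∈ A.F then true else false),
    by simp, ?_⟩
  simp only [List.map_map]
  apply List.map_congr_left
  intro j _
  by_cases hj : p j ∈ A.F <;> simp [hj, Function.comp]

lemma exists_isMaxProfile {v : Q × ℕ} (hv : memV A w v) :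
    ∃ L, IsMaxProfile A w v L := by
  obtain ⟨L₀, hL₀, hmax⟩ :=
    Set.Finite.exists_maximal (runProfiles_finite A w v) hv
  refine ⟨L₀, hL₀, fun L' hL' => ?_⟩
  rw [lexLE_iff]
  rcases le_total L' L₀ with hle | hle
  · exact hle
  · exact hmax hL' hle

lemma isMaxProfile_unique {v : Q × ℕ} {L L' : List ℕ}
    (h : IsMaxProfile A w v L) (h' : IsMaxProfile A w v L') : L = L' :=
  le_antisymm (lexLE_iff.mp (h'.2 L h.1)) (lexLE_iff.mp (h.2 L' h'.1))

lemma isMaxProfile_profile {v : Q × ℕ} (hv : memV A w v) :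
    IsMaxProfile A w v (profile A w v) := by
  have h := exists_isMaxProfile A w hv
  rw [profile, dif_pos h]
  exact h.choose_spec

open Classical in
lemma mem_runProfiles_succ {v : Q × ℕ} {i : ℕ} (hv : v.2 = i + 1) {L : List ℕ} :
    L ∈ runProfiles A w v ↔ ∃ x : Q × ℕ, x.2 = i ∧ edgeG A w x v ∧
      ∃ L', L' ∈ runProfiles A w x ∧ L = L' ++ [if v.1 ∈ A.F then 1 else 0] := by
  constructor
  · rintro ⟨p, h0, hstep, hend, rfl⟩
    rw [hv] at hstep hend
    have hrun : (List.range (i + 1)).map (fun j => if p j ∈ A.F then (1 : ℕ) else 0)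
        ∈ runProfiles A w (p i, i) :=
      ⟨p, h0, fun j hj => hstep j (by omega), rfl, rfl⟩
    have hmem : memV A w (p i, i) := Set.nonempty_of_mem hrun
    have hedge : edgeG A w (p i, i) v := ⟨hmem, hv, hend ▸ hstep i (by omega)⟩
    refine ⟨(p i, i), rfl, hedge, _, hrun, ?_⟩
    rw [hv, List.range_succ, List.map_append]
    simp [hend]
  · rintro ⟨⟨q, i'⟩, hx2, hedge, L', ⟨p', h0, hstep, hend, rfl⟩, rfl⟩
    simp only at hx2
    subst hx2
    obtain ⟨-, hv2, hρ⟩ := hedge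
    simp only at hend hstep hρ
    refine ⟨fun j => if j ≤ i' then p' j else v.1, by simp [h0], ?_, ?_, ?_⟩
    · intro j hj
      rw [hv] at hj
      have hji : j ≤ i' := by omega
      rcases Nat.lt_or_ge j i' with hlt | hge
      · have h2 : j + 1 ≤ i' := hlt
        simpa [hji, h2] using hstep j hlt
      · have hje : i' = j := by omega
        have h2 : ¬ (j + 1 ≤ i') := by omega
        simp only [if_pos hji, if_neg h2]
        rw [← hje, hend]
        exact hρ
    · rw [hv]
      have h2 : ¬ (i' + 1 ≤ i') := by omega
      simp [h2]
    · have h2 : ¬ (i' + 1 ≤ i') := by omega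
      have h1 : (List.range (i' + 1)).map
          (fun j => if (if j ≤ i' then p' j else v.1) ∈ A.F then (1 : ℕ) else 0) =
          (List.range (i' + 1)).map (fun j => if p' j ∈ A.F then (1 : ℕ) else 0) := by
        apply List.map_congr_left
        intro j hj
        rw [List.mem_range] at hj
        have hji : j ≤ i' := by omega
        simp [hji]
      rw [hv, List.range_succ (n := i' + 1), List.map_append]
      congr 1
      · exact h1.symm
      · simp [h2]

end Aux

/-- Lemma: profiles grow by one letter along `E'`.
If `u` and `u'` are nodes of the pruned run DAG `G'` and `(u, u') ∈ E'`, then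
`h_{u'} = h_u·0` or `h_{u'} = h_u·1`. -/
theorem profile_succ_of_edgeG' [Fintype Alph] [Fintype Q]
    (A : NBW Alph Q) (w : ℕ → Alph) (u u' : Q × ℕ)
    (hu : memV A w u) (hu' : memV A w u') (h : edgeG' A w u u') :
    profile A w u' = profile A w u ++ [0] ∨ profile A w u' = profile A w u ++ [1] := by
  
  have hedge := h.1
  have hv2 : u'.2 = u.2 + 1 := hedge.2.1
  have hmaxu := isMaxProfile_profile A w hu
  classical
  set b : ℕ := if u'.1 ∈ A.F then 1 else 0 with hb
  have hmem : profile A w u ++ [b] ∈ runProfiles A w u' := by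
    rw [mem_runProfiles_succ A w hv2]
    exact ⟨u, rfl, hedge, profile A w u, hmaxu.1, rfl⟩
  have hismax : IsMaxProfile A w u' (profile A w u ++ [b]) := by
    refine ⟨hmem, fun L hL => ?_⟩
    rw [mem_runProfiles_succ A w hv2] at hL
    obtain ⟨x, hx2, hxe, L', hL', rfl⟩ := hL
    have h1 : lexLE L' (profile A w x) :=
      (isMaxProfile_profile A w ⟨L', hL'⟩).2 L' hL'
    have h2 : lexLE (profile A w x) (profile A w u) := h.2 x hxe
    have h3 : lexLE L' (profile A w u) :=
      lexLE_iff.mpr (le_trans (lexLE_iff.mp h1) (lexLE_iff.mp h2))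
    have hlen : L'.length = (profile A w u).length := by
      rw [length_of_mem_runProfiles A w hL',
        length_of_mem_runProfiles A w hmaxu.1, hx2]
    exact lexLE_append b hlen h3
  have heq : profile A w u' = profile A w u ++ [b] :=
    isMaxProfile_unique A w (isMaxProfile_profile A w hu') hismax
  rw [heq]
  by_cases hF : u'.1 ∈ A.F
  · right; simp [hb, hF]
  · left; simp [hb, hF]
end

section
/- The pruned run DAG G' of an NBW A on an infinite word w is accepting if and only if A accepts w; that is, G' contains an initial path with infinitely many F-nodes iff A has an accepting run on w. -/
variable {Alph Q : Type*} (A : NBW Alph Q) (w : ℕ → Alph)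

/-- `A` accepts `w`: some run visits `F` infinitely often. -/
def AcceptsNBW : Prop :=
  ∃ p : ℕ → Q, (p 0 ∈ A.Qin ∧ ∀ i, p (i + 1) ∈ A.ρ (p i) (w i)) ∧ ∀ n, ∃ i ≥ n, p i ∈ A.F

/-- The pruned run DAG `G'` is accepting: it contains an initial path with
infinitely many `F`-nodes. -/
def GprimeAccepting : Prop :=
  ∃ p : ℕ → Q, p 0 ∈ A.Qin ∧ (∀ i, edgeG' A w (p i, i) (p (i + 1), i + 1)) ∧
    ∀ n, ∃ i ≥ n, p i ∈ A.F

/-! ### Auxiliary machinery -/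

namespace FKVW

/-- Binary value of a list of bits (most significant first). -/
def lval (L : List ℕ) : ℕ := L.foldl (fun a b => 2 * a + b) 0

lemma lval_append (L : List ℕ) (b : ℕ) : lval (L ++ [b]) = 2 * lval L + b := by
  simp [lval, List.foldl_append]

lemma foldl_shift (L : List ℕ) (c : ℕ) :
    L.foldl (fun a b => 2 * a + b) c = c * 2 ^ L.length + lval L := by
  induction L generalizing c with
  | nil => simp [lval]
  | cons a t ih =>
    have h1 : (a :: t).foldl (fun a b => 2 * a + b) c
        = t.foldl (fun a b => 2 * a + b) (2 * c + a) := rfl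
    have h2 : lval (a :: t) = t.foldl (fun a b => 2 * a + b) a := by
      simp [lval]
    rw [h1, ih, h2, ih]
    simp [List.length_cons, pow_succ]
    ring

lemma lval_cons (a : ℕ) (t : List ℕ) : lval (a :: t) = a * 2 ^ t.length + lval t := by
  have h2 : lval (a :: t) = t.foldl (fun a b => 2 * a + b) a := by simp [lval]
  rw [h2, foldl_shift]

lemma lval_lt (L : List ℕ) (h : ∀ x ∈ L, x ≤ 1) : lval L < 2 ^ L.length := by
  induction L with
  | nil => simp [lval]
  | cons a t ih =>
    have ha : a ≤ 1 := h a (by simp)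
    have ht := ih (fun x hx => h x (by simp [hx]))
    rw [lval_cons]
    have h2 : a * 2 ^ t.length ≤ 2 ^ t.length := by
      calc a * 2 ^ t.length ≤ 1 * 2 ^ t.length := Nat.mul_le_mul_right _ ha
      _ = 2 ^ t.length := one_mul _
    have h3 : (2:ℕ) ^ (t.length + 1) = 2 ^ t.length + 2 ^ t.length := by
      rw [pow_succ]; ring
    simp only [List.length_cons, h3]
    omega

lemma lex_val_lt : ∀ (L₁ L₂ : List ℕ), L₁.length = L₂.length →
    (∀ x ∈ L₁, x ≤ 1) → (∀ x ∈ L₂, x ≤ 1) →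
    List.Lex (· < ·) L₁ L₂ → lval L₁ < lval L₂ := by
  intro L₁
  induction L₁ with
  | nil =>
    intro L₂ hlen _ _ h
    cases L₂ with
    | nil => cases h
    | cons b t => simp at hlen
  | cons a t₁ ih =>
    intro L₂ hlen h1 h2 h
    cases L₂ with
    | nil => cases h
    | cons b t₂ =>
      have hlen' : t₁.length = t₂.length := by simpa using hlen
      cases h with
      | rel hab =>
        have ha : a ≤ 1 := h1 a (by simp)
        have hb : b ≤ 1 := h2 b (by simp)
        have hab' : a = 0 ∧ b = 1 := by omega
        rw [lval_cons, lval_cons, hab'.1, hab'.2]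
        have := lval_lt t₁ (fun x hx => h1 x (by simp [hx]))
        rw [hlen'] at this ⊢
        omega
      | cons h' =>
        have := ih t₂ hlen' (fun x hx => h1 x (by simp [hx]))
          (fun x hx => h2 x (by simp [hx])) h'
        rw [lval_cons, lval_cons, hlen']
        omega

lemma lex_trichot : ∀ (L₁ L₂ : List ℕ),
    List.Lex (· < ·) L₁ L₂ ∨ L₁ = L₂ ∨ List.Lex (· < ·) L₂ L₁ := by
  intro L₁
  induction L₁ with
  | nil =>
    intro L₂
    cases L₂ with
    | nil => exact Or.inr (Or.inl rfl)
    | cons b t => exact Or.inl List.Lex.nil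
  | cons a t₁ ih =>
    intro L₂
    cases L₂ with
    | nil => exact Or.inr (Or.inr List.Lex.nil)
    | cons b t₂ =>
      rcases Nat.lt_trichotomy a b with h | h | h
      · exact Or.inl (List.Lex.rel h)
      · subst h
        rcases ih t₂ with h' | h' | h'
        · exact Or.inl (List.Lex.cons h')
        · exact Or.inr (Or.inl (by rw [h']))
        · exact Or.inr (Or.inr (List.Lex.cons h'))
      · exact Or.inr (Or.inr (List.Lex.rel h))

lemma lexLE_of_val_le {L₁ L₂ : List ℕ} (hlen : L₁.length = L₂.length)
    (h1 : ∀ x ∈ L₁, x ≤ 1) (h2 : ∀ x ∈ L₂, x ≤ 1)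
    (h : lval L₁ ≤ lval L₂) : lexLE L₁ L₂ := by
  rcases lex_trichot L₁ L₂ with h' | h' | h'
  · exact Or.inl h'
  · exact Or.inr h'
  · exact absurd (lex_val_lt L₂ L₁ hlen.symm h2 h1 h') (by omega)

lemma val_le_of_lexLE {L₁ L₂ : List ℕ} (hlen : L₁.length = L₂.length)
    (h1 : ∀ x ∈ L₁, x ≤ 1) (h2 : ∀ x ∈ L₂, x ≤ 1)
    (h : lexLE L₁ L₂) : lval L₁ ≤ lval L₂ := by
  rcases h with h | h
  · exact le_of_lt (lex_val_lt L₁ L₂ hlen h1 h2 h)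
  · rw [h]

lemma eq_of_val_eq {L₁ L₂ : List ℕ} (hlen : L₁.length = L₂.length)
    (h1 : ∀ x ∈ L₁, x ≤ 1) (h2 : ∀ x ∈ L₂, x ≤ 1)
    (h : lval L₁ = lval L₂) : L₁ = L₂ := by
  rcases lex_trichot L₁ L₂ with h' | h' | h'
  · exact absurd (lex_val_lt L₁ L₂ hlen h1 h2 h') (by omega)
  · exact h'
  · exact absurd (lex_val_lt L₂ L₁ hlen.symm h2 h1 h') (by omega)

open Classical in
/-- The `F`-bit of a run at time `j`. -/
noncomputable def bitf (p : ℕ → Q) (j : ℕ) : ℕ := if p j ∈ A.F then 1 else 0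

open Classical in
/-- The profile of the run `p` up to time `n`. -/
noncomputable def prf (p : ℕ → Q) (n : ℕ) : List ℕ :=
  (List.range (n + 1)).map (fun j => if p j ∈ A.F then 1 else 0)

/-- The binary value of the profile of `p` up to time `n`. -/
noncomputable def Vp (p : ℕ → Q) (n : ℕ) : ℕ := lval (prf A p n)

/-- `p` is an accepting run of `A` on `w`. -/
def IsAcc (p : ℕ → Q) : Prop :=
  (p 0 ∈ A.Qin ∧ ∀ i, p (i + 1) ∈ A.ρ (p i) (w i)) ∧ ∀ n, ∃ i ≥ n, p i ∈ A.F

variable {A w}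

lemma bitf_le_one (p : ℕ → Q) (j : ℕ) : bitf A p j ≤ 1 := by
  unfold bitf; split <;> omega

lemma prf_eq_map (p : ℕ → Q) (n : ℕ) :
    prf A p n = (List.range (n + 1)).map (bitf A p) := rfl

lemma prf_length (p : ℕ → Q) (n : ℕ) : (prf A p n).length = n + 1 := by
  simp [prf]

lemma prf_le_one (p : ℕ → Q) (n : ℕ) : ∀ x ∈ prf A p n, x ≤ 1 := by
  intro x hx
  rw [prf_eq_map] at hx
  obtain ⟨j, _, rfl⟩ := List.mem_map.mp hx
  exact bitf_le_one p j

lemma Vp_zero (p : ℕ → Q) : Vp A p 0 = bitf A p 0 := by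
  rw [Vp, prf_eq_map]
  simp [List.range_succ, lval]

lemma Vp_succ (p : ℕ → Q) (n : ℕ) :
    Vp A p (n + 1) = 2 * Vp A p n + bitf A p (n + 1) := by
  unfold Vp
  rw [prf_eq_map, prf_eq_map, List.range_succ, List.map_append]
  simp [lval_append]

lemma Vp_lt (p : ℕ → Q) (n : ℕ) : Vp A p n < 2 ^ (n + 1) := by
  have := lval_lt (prf A p n) (prf_le_one p n)
  rwa [prf_length] at this

lemma Vp_congr {p q : ℕ → Q} (n : ℕ) (h : ∀ i ≤ n, bitf A p i = bitf A q i) :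
    Vp A p n = Vp A q n := by
  induction n with
  | zero => rw [Vp_zero, Vp_zero]; exact h 0 le_rfl
  | succ n ih =>
    rw [Vp_succ, Vp_succ, ih (fun i hi => h i (by omega)), h (n + 1) le_rfl]

lemma Vp_lower (p : ℕ → Q) {m n : ℕ} (hmn : m ≤ n) :
    Vp A p m * 2 ^ (n - m) ≤ Vp A p n := by
  induction n, hmn using Nat.le_induction with
  | base => simp
  | succ n hn ih =>
    have h1 := Vp_succ (A := A) p n
    have hp : n + 1 - m = (n - m) + 1 := by omega
    rw [hp, pow_succ, ← mul_assoc]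
    have : bitf A p (n + 1) ≥ 0 := Nat.zero_le _
    nlinarith [ih]

lemma Vp_upper (p : ℕ → Q) {m n : ℕ} (hmn : m ≤ n) :
    Vp A p n < (Vp A p m + 1) * 2 ^ (n - m) := by
  induction n, hmn using Nat.le_induction with
  | base => simp
  | succ n hn ih =>
    have h1 := Vp_succ (A := A) p n
    have hb := bitf_le_one (A := A) p (n + 1)
    have hp : n + 1 - m = (n - m) + 1 := by omega
    rw [hp, pow_succ, ← mul_assoc]
    nlinarith [ih]

lemma Vp_mono_strict {p q : ℕ → Q} {m n : ℕ} (hmn : m ≤ n)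
    (h : Vp A p m < Vp A q m) : Vp A p n < Vp A q n := by
  calc Vp A p n < (Vp A p m + 1) * 2 ^ (n - m) := Vp_upper p hmn
  _ ≤ Vp A q m * 2 ^ (n - m) := Nat.mul_le_mul_right _ (by omega)
  _ ≤ Vp A q n := Vp_lower q hmn

/-- Splicing a finite run prefix `q` (up to time `j`) with an infinite run `r`. -/
def splice (q r : ℕ → Q) (j : ℕ) : ℕ → Q := fun i => if i ≤ j then q i else r i

lemma splice_isAcc {q r : ℕ → Q} {j : ℕ} (hq0 : q 0 ∈ A.Qin)
    (hqs : ∀ i < j, q (i + 1) ∈ A.ρ (q i) (w i)) (hr : IsAcc A w r)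
    (hjoin : r (j + 1) ∈ A.ρ (q j) (w j)) : IsAcc A w (splice q r j) := by
  refine ⟨⟨by simpa [splice] using hq0, ?_⟩, ?_⟩
  · intro i
    by_cases h1 : i + 1 ≤ j
    · have h2 : i ≤ j := by omega
      simpa [splice, h1, h2] using hqs i (by omega)
    · by_cases h2 : i ≤ j
      · have h3 : i = j := by omega
        subst h3
        simpa [splice, h1, h2] using hjoin
      · have h3 : ¬ i + 1 ≤ j := by omega
        simpa [splice, h3, h2] using hr.1.2 i
  · intro n
    obtain ⟨i, hi, hF⟩ := hr.2 (max n (j + 1))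
    refine ⟨i, le_trans (le_max_left _ _) hi, ?_⟩
    have h2 : ¬ i ≤ j := by
      have := le_trans (le_max_right _ _) hi; omega
    simpa [splice, h2] using hF

lemma splice_bit_le {q r : ℕ → Q} {j i : ℕ} (h : i ≤ j) :
    bitf A (splice q r j) i = bitf A q i := by
  unfold bitf splice
  rw [if_pos h]

lemma Vp_splice {q r : ℕ → Q} (j : ℕ) : Vp A (splice q r j) j = Vp A q j :=
  Vp_congr j (fun i hi => splice_bit_le hi)

lemma exists_max_run (hacc : ∃ p, IsAcc A w p) (n : ℕ) :
    ∃ r, IsAcc A w r ∧ ∀ p, IsAcc A w p → Vp A p n ≤ Vp A r n := by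
  classical
  set S : Set ℕ := {m | ∃ p, IsAcc A w p ∧ Vp A p n = m} with hS
  have hne : S.Nonempty := ⟨_, hacc.choose, hacc.choose_spec, rfl⟩
  have hbd : BddAbove S := by
    refine ⟨2 ^ (n + 1), ?_⟩
    rintro m ⟨p, _, rfl⟩
    exact le_of_lt (Vp_lt p n)
  obtain ⟨r, hr, hrv⟩ := Nat.sSup_mem hne hbd
  refine ⟨r, hr, fun p hp => ?_⟩
  rw [hrv]
  exact le_csSup hbd ⟨p, hp, rfl⟩

/-! ### Facts about `runProfiles` and `profile` -/

lemma mem_runProfiles_length {v : Q × ℕ} {L : List ℕ} (h : L ∈ runProfiles A w v) :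
    L.length = v.2 + 1 := by
  obtain ⟨p, _, _, _, rfl⟩ := h
  simp

lemma mem_runProfiles_le_one {v : Q × ℕ} {L : List ℕ} (h : L ∈ runProfiles A w v) :
    ∀ x ∈ L, x ≤ 1 := by
  obtain ⟨p, _, _, _, rfl⟩ := h
  intro x hx
  obtain ⟨j, _, rfl⟩ := List.mem_map.mp hx
  split <;> omega

lemma exists_maxProfile {v : Q × ℕ} (h : memV A w v) :
    ∃ L, IsMaxProfile A w v L := by
  classical
  set S : Set ℕ := {m | ∃ L ∈ runProfiles A w v, lval L = m} with hS
  have hne : S.Nonempty := ⟨_, h.choose, h.choose_spec, rfl⟩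
  have hbd : BddAbove S := by
    refine ⟨2 ^ (v.2 + 1), ?_⟩
    rintro m ⟨L, hL, rfl⟩
    have := lval_lt L (mem_runProfiles_le_one hL)
    rw [mem_runProfiles_length hL] at this
    omega
  obtain ⟨L, hL, hLv⟩ := Nat.sSup_mem hne hbd
  refine ⟨L, hL, fun L' hL' => ?_⟩
  have hle : lval L' ≤ lval L := by
    rw [hLv]; exact le_csSup hbd ⟨L', hL', rfl⟩
  exact lexLE_of_val_le (by rw [mem_runProfiles_length hL', mem_runProfiles_length hL])
    (mem_runProfiles_le_one hL') (mem_runProfiles_le_one hL) hle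

lemma isMaxProfile_profile {v : Q × ℕ} (h : ∃ L, IsMaxProfile A w v L) :
    IsMaxProfile A w v (profile A w v) := by
  rw [profile, dif_pos h]
  exact h.choose_spec

lemma profile_eq_of_isMax {v : Q × ℕ} {L : List ℕ} (h : IsMaxProfile A w v L) :
    profile A w v = L := by
  have h2 := isMaxProfile_profile ⟨L, h⟩
  have a1 := h.2 _ h2.1
  have a2 := h2.2 _ h.1
  have hlen : (profile A w v).length = L.length := by
    rw [mem_runProfiles_length h2.1, mem_runProfiles_length h.1]
  have v1 := val_le_of_lexLE hlen (mem_runProfiles_le_one h2.1) (mem_runProfiles_le_one h.1) a1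
  have v2 := val_le_of_lexLE hlen.symm (mem_runProfiles_le_one h.1) (mem_runProfiles_le_one h2.1) a2
  exact eq_of_val_eq hlen (mem_runProfiles_le_one h2.1) (mem_runProfiles_le_one h.1) (by omega)

end FKVW

open FKVW in
/-- Theorem: `G'` is accepting iff `A` accepts `w`. -/
theorem gprime_accepting_iff_accepts [Fintype Alph] [Fintype Q]
    (A : NBW Alph Q) (w : ℕ → Alph) :
    GprimeAccepting A w ↔ AcceptsNBW A w := by
  constructor
  · rintro ⟨p, h0, hE, hF⟩
    exact ⟨p, ⟨h0, fun i => (hE i).1.2.2⟩, hF⟩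
  · intro hacc
    classical
    have hacc' : ∃ p, IsAcc A w p := hacc
    -- a family of lexicographically maximal accepting runs
    choose r hrAcc hrMax using fun n => exists_max_run hacc' n
    -- consistency of the maximal values
    have hcons : ∀ m n, m ≤ n → Vp A (r n) m = Vp A (r m) m := by
      intro m n hmn
      refine le_antisymm (hrMax m (r n) (hrAcc n)) ?_
      by_contra hlt
      push_neg at hlt
      have h1 : Vp A (r n) n < Vp A (r m) n := Vp_mono_strict hmn hlt
      have h2 := hrMax n (r m) (hrAcc m)
      omega
    set g : ℕ → ℕ := fun j => bitf A (r j) j with hg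
    have hbits : ∀ n j, j ≤ n → bitf A (r n) j = g j := by
      intro n j hj
      cases j with
      | zero =>
        have e1 : Vp A (r n) 0 = Vp A (r 0) 0 := hcons 0 n (by omega)
        rw [Vp_zero, Vp_zero] at e1
        exact e1
      | succ k =>
        have e1 := hcons (k + 1) n hj
        have e2 := hcons k n (by omega)
        have e3 := hcons k (k + 1) (by omega)
        have s1 := Vp_succ (A := A) (r n) k
        have s2 := Vp_succ (A := A) (r (k + 1)) k
        have hgk : g (k + 1) = bitf A (r (k + 1)) (k + 1) := rfl
        rw [hgk]
        omega
    -- `g` has infinitely many ones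
    have hg1 : ∀ N, ∃ j, N < j ∧ g j = 1 := by
      intro N
      obtain ⟨i0, hi0, hF⟩ := (hrAcc N).2 (N + 1)
      by_contra hno
      push_neg at hno
      have hz : ∀ k, N + k ≤ i0 → Vp A (r i0) (N + k) = Vp A (r i0) N * 2 ^ k := by
        intro k
        induction k with
        | zero => simp
        | succ k ih =>
          intro hk
          have hb0 : bitf A (r i0) (N + k + 1) = 0 := by
            have hb1 := hbits i0 (N + k + 1) (by omega)
            have hb2 := bitf_le_one (A := A) (r (N + k + 1)) (N + k + 1)
            have hb3 := hno (N + k + 1) (by omega)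
            rw [hb1]
            have : g (N + k + 1) ≤ 1 := hb2
            omega
          have := Vp_succ (A := A) (r i0) (N + k)
          rw [show N + (k + 1) = (N + k) + 1 by omega, this, ih (by omega), hb0, pow_succ]
          ring
      have e0 := hz (i0 - N) (by omega)
      rw [show N + (i0 - N) = i0 by omega] at e0
      have l1 : Vp A (r N) N * 2 ^ (i0 - 1 - N) ≤ Vp A (r N) (i0 - 1) :=
        Vp_lower (r N) (by omega)
      have l2 : Vp A (r N) i0 = 2 * Vp A (r N) (i0 - 1) + bitf A (r N) i0 := by
        have := Vp_succ (A := A) (r N) (i0 - 1)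
        rwa [show i0 - 1 + 1 = i0 by omega] at this
      have l3 : bitf A (r N) i0 = 1 := by simp [bitf, hF]
      have l4 : Vp A (r i0) N = Vp A (r N) N := hcons N i0 (by omega)
      have l5 := hrMax i0 (r N) (hrAcc N)
      rw [l4] at e0
      have e1 : Vp A (r N) N * 2 ^ (i0 - N) = 2 * (Vp A (r N) N * 2 ^ (i0 - 1 - N)) := by
        rw [show i0 - N = (i0 - 1 - N) + 1 by omega, pow_succ]; ring
      rw [e1] at e0
      omega
    -- the nodes along a maximal run carry maximal profiles
    have hnodeMax : ∀ n j, j ≤ n → IsMaxProfile A w (r n j, j) (prf A (r n) j) := by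
      intro n j hjn
      constructor
      · exact ⟨r n, (hrAcc n).1.1, fun i _ => (hrAcc n).1.2 i, rfl, rfl⟩
      · intro L' hL'
        obtain ⟨q, hq0, hqs, hqj, hLeq⟩ := hL'
        have hsacc : IsAcc A w (splice q (r n) j) := by
          refine splice_isAcc hq0 hqs (hrAcc n) ?_
          rw [hqj]
          exact (hrAcc n).1.2 j
        have hVs : Vp A (splice q (r n) j) j = lval L' := by
          rw [Vp_splice, hLeq]; rfl
        have hle := hrMax n _ hsacc
        have hval : lval L' ≤ Vp A (r n) j := by
          by_contra hgt
          push_neg at hgt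
          have : Vp A (r n) j < Vp A (splice q (r n) j) j := by omega
          have := Vp_mono_strict hjn this
          omega
        refine lexLE_of_val_le ?_ ?_ ?_ hval
        · rw [mem_runProfiles_length (v := (r n j, j)) ⟨q, hq0, hqs, hqj, hLeq⟩, prf_length]
        · exact mem_runProfiles_le_one (v := (r n j, j)) ⟨q, hq0, hqs, hqj, hLeq⟩
        · exact prf_le_one (r n) j
    have hmemV : ∀ n j, j ≤ n → memV A w (r n j, j) :=
      fun n j hj => ⟨_, (hnodeMax n j hj).1⟩
    have hprofEq : ∀ n j, j ≤ n → profile A w (r n j, j) = prf A (r n) j :=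
      fun n j hj => profile_eq_of_isMax (hnodeMax n j hj)
    -- the edges along a maximal run are in G'
    have hedge : ∀ n j, j + 1 ≤ n → edgeG' A w (r n j, j) (r n (j + 1), j + 1) := by
      intro n j hjn
      refine ⟨⟨hmemV n j (by omega), rfl, (hrAcc n).1.2 j⟩, ?_⟩
      rintro ⟨q', j'⟩ ⟨hmem', hj', hstep⟩
      have hj'' : j = j' := by simpa using hj'
      subst hj''
      have hmp := isMaxProfile_profile (exists_maxProfile hmem')
      obtain ⟨q, hq0, hqs, hqj, hLeq⟩ := hmp.1
      have hsacc : IsAcc A w (splice q (r n) j) := by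
        refine splice_isAcc hq0 hqs (hrAcc n) ?_
        rw [hqj]
        exact hstep
      have hVs : Vp A (splice q (r n) j) j = lval (profile A w (q', j)) := by
        rw [Vp_splice, hLeq]; rfl
      have hle := hrMax n _ hsacc
      have hval : lval (profile A w (q', j)) ≤ Vp A (r n) j := by
        by_contra hgt
        push_neg at hgt
        have h5 : Vp A (r n) j < Vp A (splice q (r n) j) j := by omega
        have := Vp_mono_strict (le_trans (by omega : j ≤ j + 1) hjn) h5
        omega
      rw [hprofEq n j (by omega)]
      refine lexLE_of_val_le ?_ ?_ ?_ hval
      · rw [mem_runProfiles_length hmp.1, prf_length]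
      · exact mem_runProfiles_le_one hmp.1
      · exact prf_le_one (r n) j
    -- König-style compactness argument
    letI : TopologicalSpace Q := ⊥
    haveI : DiscreteTopology Q := ⟨rfl⟩
    set C : ℕ → Set (ℕ → Q) := fun n =>
      {p | p 0 ∈ A.Qin ∧ (∀ j, j + 1 ≤ n → edgeG' A w (p j, j) (p (j + 1), j + 1)) ∧
        ∀ j ≤ n, bitf A p j = g j} with hC
    have hCne : ∀ n, (C n).Nonempty :=
      fun n => ⟨r n, (hrAcc n).1.1, fun j hj => hedge n j hj, fun j hj => hbits n j hj⟩
    have hCcl : ∀ n, IsClosed (C n) := by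
      intro n
      have hrw : C n = ((fun p : ℕ → Q => p 0) ⁻¹' A.Qin) ∩
          ((⋂ j, ⋂ (_ : j + 1 ≤ n), (fun p : ℕ → Q => (p j, p (j + 1))) ⁻¹'
              {x : Q × Q | edgeG' A w (x.1, j) (x.2, j + 1)}) ∩
           (⋂ j, ⋂ (_ : j ≤ n), (fun p : ℕ → Q => p j) ⁻¹'
              {x : Q | (if x ∈ A.F then 1 else 0) = g j})) := by
        ext p
        simp only [hC, Set.mem_setOf_eq, Set.mem_inter_iff, Set.mem_iInter,
          Set.mem_preimage, bitf]
      rw [hrw]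
      refine IsClosed.inter (IsClosed.preimage (continuous_apply 0) ?_)
        (IsClosed.inter ?_ ?_)
      · exact isClosed_discrete _
      · refine isClosed_iInter fun j => isClosed_iInter fun _ => ?_
        exact IsClosed.preimage ((continuous_apply j).prodMk (continuous_apply (j + 1)))
          (isClosed_discrete _)
      · refine isClosed_iInter fun j => isClosed_iInter fun _ => ?_
        exact IsClosed.preimage (continuous_apply j) (isClosed_discrete _)
    have hdir : Directed (· ⊇ ·) C := by
      intro m n
      refine ⟨max m n, ?_, ?_⟩ <;>
        · intro p hp
          exact ⟨hp.1, fun j hj => hp.2.1 j (by omega), fun j hj => hp.2.2 j (by omega)⟩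
    have hnon := IsCompact.nonempty_iInter_of_directed_nonempty_isCompact_isClosed
      C hdir hCne (fun n => (hCcl n).isCompact) hCcl
    obtain ⟨p, hp⟩ := hnon
    rw [Set.mem_iInter] at hp
    refine ⟨p, (hp 0).1, fun i => (hp (i + 1)).2.1 i le_rfl, ?_⟩
    intro n
    obtain ⟨j, hj, hj1⟩ := hg1 n
    have hb := (hp j).2.2 j le_rfl
    refine ⟨j, by omega, ?_⟩
    by_contra hFc
    rw [hj1] at hb
    simp [bitf, hFc] at hb
end

section
/- For classes U and W on the same level i of the profile tree T, if U ≠ W then gl(U) ≠ gl(W); that is, the global labeling gl assigns distinct labels to distinct classes on the same level. -/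
variable {Alph Q : Type*} (A : NBW Alph Q) (w : ℕ → Alph)

/-- The equivalence class (under equality of profiles, levelwise) of a node `u` of `G'`. -/
def classOf (u : Q × ℕ) : Set (Q × ℕ) :=
  { v | memV A w v ∧ v.2 = u.2 ∧ profile A w v = profile A w u }

/-- `C` is a class (node) of the profile tree `T` on level `i`. -/
def ClassAt (C : Set (Q × ℕ)) (i : ℕ) : Prop :=
  ∃ u, memV A w u ∧ u.2 = i ∧ C = classOf A w u

/-- The child relation of the profile tree `T`: `[v]` is a child of `[u]`
whenever `(u, v) ∈ E'`. -/
def childC (C D : Set (Q × ℕ)) : Prop :=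
  ∃ u v, edgeG' A w u v ∧ memV A w v ∧ C = classOf A w u ∧ D = classOf A w v

/-- `D` is a descendant of `C` in `T`: there is a (possibly empty) path from `C` to `D`. -/
def DescC : Set (Q × ℕ) → Set (Q × ℕ) → Prop := Relation.ReflTransGen (childC A w)

/-- `C` is an `F`-class: all its members are `F`-nodes. -/
def IsFClass (C : Set (Q × ℕ)) : Prop := ∀ v ∈ C, v.1 ∈ A.F

/-- `h_C ≤ h_D` for classes `C`, `D` (members of a class all share one profile). -/
def profLE (C D : Set (Q × ℕ)) : Prop :=
  ∀ u ∈ C, ∀ v ∈ D, lexLE (profile A w u) (profile A w v)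

/-- `h_C < h_D` for classes `C`, `D`. -/
def profLT (C D : Set (Q × ℕ)) : Prop :=
  ∀ u ∈ C, ∀ v ∈ D, lexLT (profile A w u) (profile A w v)

/-- `C` (a class on level `i`) is before `D` (a class on level `j`):
`i < j`, or `i = j` and `h_C < h_D`. -/
def BeforeC (C : Set (Q × ℕ)) (i : ℕ) (D : Set (Q × ℕ)) (j : ℕ) : Prop :=
  i < j ∨ (i = j ∧ profLT A w C D)

/-- `C` (on level `i`) is `first(m)` for the labeling `gl`: the first class
(in the `before` order) labeled `m`. -/
def IsFirst (gl : Set (Q × ℕ) → ℕ) (m : ℕ) (C : Set (Q × ℕ)) (i : ℕ) : Prop :=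
  ClassAt A w C i ∧ gl C = m ∧
    ∀ D j, ClassAt A w D j → gl D = m → ¬ BeforeC A w D j C i

/-- `C` is a descendant of `first(m)` (for the labeling `gl`). -/
def DescFirst (gl : Set (Q × ℕ) → ℕ) (m : ℕ) (C : Set (Q × ℕ)) : Prop :=
  ∃ Fm j, IsFirst A w gl m Fm j ∧ DescC A w Fm C

/-- `C = lmd(m, i)` for the labeling `gl`: `C` is the class of lexicographically
minimal profile among the descendants of `first(m)` on level `i`. -/
def IsLmd (gl : Set (Q × ℕ) → ℕ) (m i : ℕ) (C : Set (Q × ℕ)) : Prop :=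
  ClassAt A w C i ∧ DescFirst A w gl m C ∧
    ∀ D, ClassAt A w D i → DescFirst A w gl m D → profLE A w C D

/-- `gl` is the global labeling of the profile tree `T`:
`gl(U₀) = 0` for the level-0 class; for every class `U` on level `i`,
if `labels(U) = {m ∣ U = lmd(m,i)}` is nonempty then `gl(U) = min(labels(U))`,
and otherwise `gl(U) = 1 + max{gl(W) ∣ W before U}`. -/
def GlSpec (gl : Set (Q × ℕ) → ℕ) : Prop :=
  (∀ C, ClassAt A w C 0 → gl C = 0) ∧
  ∀ C i, ClassAt A w C i →
    ((∃ m, IsLmd A w gl m i C) →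
        IsLmd A w gl (gl C) i C ∧ ∀ m, IsLmd A w gl m i C → gl C ≤ m) ∧
    ((¬ ∃ m, IsLmd A w gl m i C) →
        (∃ D j, ClassAt A w D j ∧ BeforeC A w D j C i ∧ gl C = gl D + 1) ∧
        ∀ D j, ClassAt A w D j → BeforeC A w D j C i → gl D < gl C)


section AuxLemmas

variable {Alph Q : Type*} (A : NBW Alph Q) (w : ℕ → Alph)

lemma lexLT_lexLE_false {a b : List ℕ} (h1 : lexLT a b) (h2 : lexLE b a) : False := by
  rcases h2 with h2 | rfl
  · exact (List.Lex.asymm (α := ℕ) (· < ·)).asymm _ _ h1 h2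
  · exact (List.Lex.asymm (α := ℕ) (· < ·)).asymm _ _ h1 h1

lemma mem_classOf_self {u : Q × ℕ} (h : memV A w u) : u ∈ classOf A w u :=
  ⟨h, rfl, rfl⟩

lemma classAt_level_unique {C : Set (Q × ℕ)} {i j : ℕ}
    (hi : ClassAt A w C i) (hj : ClassAt A w C j) : i = j := by
  obtain ⟨u, hu, hui, hCu⟩ := hi
  obtain ⟨v, hv, hvj, hCv⟩ := hj
  have hvm : v ∈ classOf A w u := by
    rw [← hCu, hCv]; exact mem_classOf_self A w hv
  rw [← hui, ← hvj, hvm.2.1]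

lemma classAt_rep {C : Set (Q × ℕ)} {i : ℕ} (h : ClassAt A w C i) :
    ∃ u, u ∈ C ∧ u.2 = i ∧ C = classOf A w u := by
  obtain ⟨u, hu, hui, hC⟩ := h
  exact ⟨u, hC ▸ mem_classOf_self A w hu, hui, hC⟩

lemma class_eq_of_profile_eq {U W : Set (Q × ℕ)} {i : ℕ}
    (hU : ClassAt A w U i) (hW : ClassAt A w W i)
    {u v : Q × ℕ} (hu : u ∈ U) (hv : v ∈ W)
    (hp : profile A w u = profile A w v) : U = W := by
  obtain ⟨u₀, hu₀, hu₀i, hUc⟩ := classAt_rep A w hU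
  obtain ⟨v₀, hv₀, hv₀i, hWc⟩ := classAt_rep A w hW
  have hmu : u ∈ classOf A w u₀ := hUc ▸ hu
  have hmv : v ∈ classOf A w v₀ := hWc ▸ hv
  have hpe : profile A w u₀ = profile A w v₀ := by
    rw [← hmu.2.2, ← hmv.2.2, hp]
  rw [hUc, hWc]
  ext x
  constructor
  · rintro ⟨hx, hx2, hx3⟩
    exact ⟨hx, by rw [hx2, hu₀i, hv₀i], by rw [hx3, hpe]⟩
  · rintro ⟨hx, hx2, hx3⟩
    exact ⟨hx, by rw [hx2, hv₀i, hu₀i], by rw [hx3, hpe]⟩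

lemma class_trichotomy {U W : Set (Q × ℕ)} {i : ℕ}
    (hU : ClassAt A w U i) (hW : ClassAt A w W i) :
    U = W ∨ profLT A w U W ∨ profLT A w W U := by
  obtain ⟨u₀, hu₀, hu₀i, hUc⟩ := classAt_rep A w hU
  obtain ⟨v₀, hv₀, hv₀i, hWc⟩ := classAt_rep A w hW
  rcases (show List.Lex (α := ℕ) (· < ·) (profile A w u₀) (profile A w v₀) ∨
      profile A w u₀ = profile A w v₀ ∨ List.Lex (α := ℕ) (· < ·) (profile A w v₀) (profile A w u₀) by
        by_contra hc; push_neg at hc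
        exact hc.2.1 ((List.Lex.trichotomous (α := ℕ) (· < ·)).trichotomous _ _ hc.1 hc.2.2))
      with h1 | h1 | h1
  · refine Or.inr (Or.inl ?_)
    intro u hu v hv
    have hmu : u ∈ classOf A w u₀ := hUc ▸ hu
    have hmv : v ∈ classOf A w v₀ := hWc ▸ hv
    rw [lexLT, hmu.2.2, hmv.2.2]; exact h1
  · exact Or.inl (class_eq_of_profile_eq A w hU hW hu₀ hv₀ h1)
  · refine Or.inr (Or.inr ?_)
    intro v hv u hu
    have hmu : u ∈ classOf A w u₀ := hUc ▸ hu
    have hmv : v ∈ classOf A w v₀ := hWc ▸ hv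
    rw [lexLT, hmu.2.2, hmv.2.2]; exact h1

lemma profLT_profLE_false {U W : Set (Q × ℕ)} {i : ℕ}
    (hU : ClassAt A w U i) (hW : ClassAt A w W i)
    (h1 : profLT A w U W) (h2 : profLE A w W U) : False := by
  obtain ⟨u₀, hu₀, -, -⟩ := classAt_rep A w hU
  obtain ⟨v₀, hv₀, -, -⟩ := classAt_rep A w hW
  exact lexLT_lexLE_false (h1 u₀ hu₀ v₀ hv₀) (h2 v₀ hv₀ u₀ hu₀)

lemma descC_level {C D : Set (Q × ℕ)} (h : DescC A w C D) {i : ℕ}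
    (hC : ClassAt A w C i) :
    ∀ j, ClassAt A w D j → i ≤ j ∧ (i = j → C = D) := by
  induction h with
  | refl =>
    intro j hj
    have := classAt_level_unique A w hC hj
    exact ⟨this.le, fun _ => rfl⟩
  | tail _ hED ih =>
    intro j hj
    obtain ⟨u, v, he, hv, hEc, hDc⟩ := hED
    have hmu : memV A w u := he.1.1
    have hE : ClassAt A w _ u.2 := ⟨u, hmu, rfl, hEc⟩
    have hD' : ClassAt A w _ v.2 := ⟨v, hv, rfl, hDc⟩
    have hjv : j = v.2 := (classAt_level_unique A w hD' hj).symm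
    have hiu : i ≤ u.2 := (ih u.2 hE).1
    have hlt : i < j := by
      rw [hjv, he.1.2.1]; omega
    exact ⟨hlt.le, fun hij => absurd hij hlt.ne⟩

lemma gl_key {gl : Set (Q × ℕ) → ℕ} (hgl : GlSpec A w gl)
    {i : ℕ} {U W : Set (Q × ℕ)} (hU : ClassAt A w U i) (hW : ClassAt A w W i)
    (hlt : profLT A w U W) (heq : gl U = gl W) : False := by
  have hUbW : BeforeC A w U i W i := Or.inr ⟨rfl, hlt⟩
  by_cases hWl : ∃ m, IsLmd A w gl m i W
  · -- W is an lmd class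
    have hWlmd := ((hgl.2 W i hW).1 hWl).1
    by_cases hUl : ∃ m, IsLmd A w gl m i U
    · have hUlmd := ((hgl.2 U i hU).1 hUl).1
      rw [heq] at hUlmd
      -- both U and W are lmd (gl W, i); minimality of W gives profLE W U
      have hle : profLE A w W U := hWlmd.2.2 U hU hUlmd.2.1
      exact profLT_profLE_false A w hU hW hlt hle
    · -- U has empty labels: every class before U has smaller label
      have hmax := ((hgl.2 U i hU).2 hUl).2
      obtain ⟨Fm, j, hFirst, hDesc⟩ := hWlmd.2.1
      have hFmC : ClassAt A w Fm j := hFirst.1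
      obtain ⟨hji, hjeq⟩ := descC_level A w hDesc hFmC i hW
      rcases lt_or_eq_of_le hji with hlt' | hje
      · -- Fm is strictly before level i, hence before U
        have := hmax Fm j hFmC (Or.inl hlt')
        rw [hFirst.2.1, ← heq] at this
        exact lt_irrefl _ this
      · -- Fm = W, contradicting that no class labeled m is before first(m)
        have hFW : Fm = W := hjeq hje
        have := hFirst.2.2 U i hU (by rw [heq, ← hFirst.2.1])
        apply this
        rw [hFW, hje]
        exact hUbW
  · -- W has empty labels: U is before W, so gl U < gl W
    have := ((hgl.2 W i hW).2 hWl).2 U i hU hUbW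
    omega

end AuxLemmas

/-- the global labeling assigns distinct labels to distinct classes
on the same level. -/
theorem gl_injective_on_level [Fintype Alph] [Fintype Q]
    (A : NBW Alph Q) (w : ℕ → Alph) (gl : Set (Q × ℕ) → ℕ) (hgl : GlSpec A w gl)
    (i : ℕ) (U W : Set (Q × ℕ)) (hU : ClassAt A w U i) (hW : ClassAt A w W i)
    (hne : U ≠ W) : gl U ≠ gl W := by
  intro heq
  rcases class_trichotomy A w hU hW with h | h | h
  · exact hne h
  · exact gl_key A w hgl hU hW h heq
  · exact gl_key A w hgl hW hU h heq.symm
end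

section
/- Every class U of the profile tree T is a descendant of first(gl(U)), the first class carrying U's global label. -/
variable {Alph Q : Type*} (A : NBW Alph Q) (w : ℕ → Alph)

/-- every class `U` is a descendant of `first(gl(U))`. -/
theorem descendant_of_first [Fintype Alph] [Fintype Q]
    (A : NBW Alph Q) (w : ℕ → Alph) (gl : Set (Q × ℕ) → ℕ) (hgl : GlSpec A w gl)
    (i : ℕ) (U : Set (Q × ℕ)) (hU : ClassAt A w U i) :
    ∃ Fm j, IsFirst A w gl (gl U) Fm j ∧ DescC A w Fm U := by
  by_cases h : ∃ m, IsLmd A w gl m i U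
  · exact ((hgl.2 U i hU).1 h).1.2.1
  · refine ⟨U, i, ⟨hU, rfl, fun D j hD hglD hB => ?_⟩, Relation.ReflTransGen.refl⟩
    exact absurd hglD (Nat.ne_of_lt (((hgl.2 U i hU).2 h).2 D j hD hB))
end
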